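/- arXiv:1301.5206 — 2 statements merged into one kernel-verified Lean document; each statement's English description precedes it below -/
import Mathlib

section
/- (Eklof Lemma.) Let R be a ring, B a class of right R-modules, and M a right R-module admitting a filtration (M_α)_{α ≤ σ}, i.e., an increasing continuous chain of submodules with M_0 = 0 and M_σ = M, such that Ext¹_R(M_{α+1}/M_α, B) = 0 for every α < σ and every B ∈ B. Then Ext¹_R(M, B) = 0 for every B ∈ B. -/
open CategoryTheory CategoryTheory.Limits

universe u

variable (R : Type u) [Ring R]

/-- `Ext¹_R(A, B) = 0`: every short exact sequence `0 → B → E → A → 0` of `R`-modules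
splits. -/
def Ext1Zero (A B : ModuleCat.{u} R) : Prop :=
  ∀ (E : ModuleCat.{u} R) (i : B ⟶ E) (p : E ⟶ A) (w : i ≫ p = 0),
    (ShortComplex.mk i p w).ShortExact → ∃ s : A ⟶ E, s ≫ p = 𝟙 A

/-- `(F α)_{α ≤ σ}` is an increasing continuous chain of submodules of `M`
with `F 0 = 0` and `F σ = M`. -/
structure IsOrdinalFiltration {M : ModuleCat.{u} R} (σ : Ordinal.{u})
    (F : Ordinal.{u} → Submodule R M) : Prop where
  zero : F 0 = ⊥
  top : F σ = ⊤
  mono : ∀ {α β : Ordinal.{u}}, α ≤ β → β ≤ σ → F α ≤ F β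
  limit : ∀ {l : Ordinal.{u}}, l ≤ σ → Order.IsSuccLimit l →
    F l = ⨆ (α : Ordinal.{u}) (_ : α < l), F α

/-- Successor step: extend a partial splitting. -/
lemma step {B E M : ModuleCat.{u} R} (i : B ⟶ E) (p : E ⟶ M)
    (hi : Function.Injective i) (hp : Function.Surjective p)
    (hrange : LinearMap.range i.hom = LinearMap.ker p.hom)
    {K N : Submodule R M} (hKN : K ≤ N)
    (hext : Ext1Zero R (ModuleCat.of R (↥N ⧸ Submodule.comap N.subtype K)) B)
    (D : Submodule R E) (hDinj : ∀ x ∈ D, p x = 0 → x = 0)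
    (hDmap : Submodule.map p.hom D = K) :
    ∃ D' : Submodule R E, D ≤ D' ∧ (∀ x ∈ D', p x = 0 → x = 0) ∧
      Submodule.map p.hom D' = N := by
  classical
  set E' : Submodule R E := Submodule.comap p.hom N with hE'
  have hDE' : D ≤ E' := by
    intro x hx
    have : p x ∈ K := hDmap ▸ ⟨x, hx, rfl⟩
    exact hKN this
  set p' : ↥E' →ₗ[R] ↥N := p.hom.restrict (fun x hx => hx) with hp'
  set W : Submodule R ↥E' := Submodule.comap E'.subtype D with hW
  set K' : Submodule R ↥N := Submodule.comap N.subtype K with hK'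
  set Q : ModuleCat.{u} R := ModuleCat.of R (↥N ⧸ K') with hQ
  set E'' : ModuleCat.{u} R := ModuleCat.of R (↥E' ⧸ W) with hE''
  have hiN : ∀ b : B, p (i b) = 0 := by
    intro b
    have : i b ∈ LinearMap.ker p.hom := hrange ▸ ⟨b, rfl⟩
    exact this
  have hiE' : ∀ b : B, i b ∈ E' := by
    intro b; show p (i b) ∈ N; rw [hiN b]; exact N.zero_mem
  set i'' : B ⟶ E'' := ModuleCat.ofHom (W.mkQ ∘ₗ (LinearMap.codRestrict E' i.hom hiE')) with hi''
  have hWker : W ≤ LinearMap.ker (K'.mkQ ∘ₗ p') := by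
    intro x hx
    have hpx : p x.1 ∈ K := hDmap ▸ ⟨x.1, hx, rfl⟩
    simp only [LinearMap.mem_ker, LinearMap.comp_apply]
    rw [Submodule.mkQ_apply, Submodule.Quotient.mk_eq_zero]
    exact hpx
  set p'' : E'' ⟶ Q := ModuleCat.ofHom (Submodule.liftQ W (K'.mkQ ∘ₗ p') hWker) with hp''
  -- computation rules
  have hi''b : ∀ b : B, i'' b = Submodule.Quotient.mk ⟨i b, hiE' b⟩ := fun _ => rfl
  have hp''mk : ∀ e : ↥E',
      p'' (Submodule.Quotient.mk e) = Submodule.Quotient.mk (p' e) := fun _ => rfl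
  have hp'val : ∀ e : ↥E', (p' e : M) = p e.1 := fun _ => rfl
  have hmemW : ∀ e : ↥E', e ∈ W ↔ (e : E) ∈ D := fun _ => Iff.rfl
  have hmemK' : ∀ n : ↥N, n ∈ K' ↔ (n : M) ∈ K := fun _ => Iff.rfl
  have w'' : i'' ≫ p'' = 0 := by
    refine ModuleCat.hom_ext (LinearMap.ext fun b => ?_)
    show p'' (i'' b) = 0
    rw [hi''b, hp''mk, Submodule.Quotient.mk_eq_zero, hmemK', hp'val]
    show p (i b) ∈ K
    rw [hiN b]; exact K.zero_mem
  have hexact : (ShortComplex.mk i'' p'' w'').Exact := by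
    rw [ShortComplex.moduleCat_exact_iff]
    intro x₂ hx₂
    obtain ⟨⟨e, he⟩, rfl⟩ := Submodule.Quotient.mk_surjective W x₂
    have hpe : p e ∈ K := by
      replace hx₂ : p'' (Submodule.Quotient.mk ⟨e, he⟩) = 0 := hx₂
      rw [hp''mk, Submodule.Quotient.mk_eq_zero, hmemK', hp'val] at hx₂
      exact hx₂
    rw [← hDmap] at hpe
    obtain ⟨d, hd, hpd⟩ := hpe
    have hker : e - d ∈ LinearMap.ker p.hom := by
      simp [LinearMap.mem_ker, map_sub, hpd]
    rw [← hrange] at hker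
    obtain ⟨b, hb⟩ := hker
    refine ⟨b, ?_⟩
    rw [hi''b, Submodule.Quotient.eq]
    rw [hmemW]
    show i b - e ∈ D
    have hib : i b - e = -d := by rw [hb]; abel
    rw [hib]
    exact D.neg_mem hd
  have hmono : Mono i'' := by
    rw [ModuleCat.mono_iff_injective]
    have h0 : ∀ b : B, i'' b = 0 → b = 0 := by
      intro b hb
      rw [hi''b, Submodule.Quotient.mk_eq_zero, hmemW] at hb
      have hib : i b = 0 := hDinj _ hb (hiN _)
      exact hi (by simpa using hib)
    intro b₁ b₂ hb
    have := h0 (b₁ - b₂) (by rw [map_sub, hb, sub_self])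
    exact sub_eq_zero.mp this
  have hepi : Epi p'' := by
    rw [ModuleCat.epi_iff_surjective]
    intro q
    obtain ⟨⟨n, hn⟩, rfl⟩ := Submodule.Quotient.mk_surjective K' q
    obtain ⟨e, he⟩ := hp n
    have heE' : e ∈ E' := by show p e ∈ N; rw [he]; exact hn
    refine ⟨Submodule.Quotient.mk ⟨e, heE'⟩, ?_⟩
    rw [hp''mk]
    congr 1
    exact Subtype.ext he
  have hSE'' : (ShortComplex.mk i'' p'' w'').ShortExact :=
    { exact := hexact, mono_f := hmono, epi_g := hepi }
  obtain ⟨s', hs'⟩ := hext E'' i'' p'' w'' hSE''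
  have hs'app : ∀ q : Q, p'' (s' q) = q := fun q => LinearMap.congr_fun (congrArg ModuleCat.Hom.hom hs') q
  set D' : Submodule R ↥E := Submodule.map E'.subtype
    (Submodule.comap W.mkQ (LinearMap.range s'.hom)) with hD'
  have hmemD' : ∀ x : E, x ∈ D' ↔ ∃ h : x ∈ E',
      (Submodule.Quotient.mk ⟨x, h⟩ : ↥E' ⧸ W) ∈ LinearMap.range s'.hom := by
    intro x
    constructor
    · rintro ⟨⟨e, he⟩, hx, rfl⟩
      exact ⟨he, hx⟩
    · rintro ⟨h, hx⟩
      exact ⟨⟨x, h⟩, hx, rfl⟩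
  refine ⟨D', ?_, ?_, ?_⟩
  · intro d hd
    rw [hmemD' d]
    refine ⟨hDE' hd, ?_⟩
    have : (Submodule.Quotient.mk ⟨d, hDE' hd⟩ : ↥E' ⧸ W) = 0 := by
      rw [Submodule.Quotient.mk_eq_zero, hmemW]; exact hd
    rw [this]
    exact ⟨0, map_zero _⟩
  · intro x hx hpx
    rw [hmemD' x] at hx
    obtain ⟨hxE', hq⟩ := hx
    obtain ⟨q, hq⟩ := hq
    have hq0 : q = 0 := by
      have h1 := hs'app q
      rw [hq, hp''mk] at h1
      have h2 : (p' ⟨x, hxE'⟩ : ↥N) = 0 := Subtype.ext (by rw [hp'val]; exact hpx)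
      rw [← h1, h2]
      exact (Submodule.Quotient.mk_eq_zero _).mpr K'.zero_mem
    rw [hq0, map_zero] at hq
    have : (⟨x, hxE'⟩ : ↥E') ∈ W := (Submodule.Quotient.mk_eq_zero W).mp hq.symm
    rw [hmemW] at this
    exact hDinj x this hpx
  · apply le_antisymm
    · rintro _ ⟨_, ⟨⟨e, he⟩, _, rfl⟩, rfl⟩
      exact he
    · intro n hn
      obtain ⟨⟨e', he'⟩, hmk⟩ :=
        Submodule.Quotient.mk_surjective W (s' (Submodule.Quotient.mk ⟨n, hn⟩))
      have h1 : p'' (Submodule.Quotient.mk ⟨e', he'⟩) = Submodule.Quotient.mk ⟨n, hn⟩ := by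
        rw [hmk, hs'app]
      rw [hp''mk] at h1
      have h2 : (p' ⟨e', he'⟩ : ↥N) - ⟨n, hn⟩ ∈ K' := (Submodule.Quotient.eq K').mp h1
      have h3 : p e' - n ∈ K := h2
      rw [← hDmap] at h3
      obtain ⟨d, hd, hpd⟩ := h3
      have hdE' : d ∈ E' := hDE' hd
      have hxE' : e' - d ∈ E' := E'.sub_mem he' hdE'
      refine ⟨e' - d, ?_, ?_⟩
      · show e' - d ∈ D'
        rw [hmemD' (e' - d)]
        refine ⟨hxE', ?_⟩
        have heq : (Submodule.Quotient.mk ⟨e' - d, hxE'⟩ : ↥E' ⧸ W)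
            = Submodule.Quotient.mk ⟨e', he'⟩ := by
          rw [Submodule.Quotient.eq]
          rw [hmemW]
          show e' - d - e' ∈ D
          have : e' - d - e' = -d := by abel
          rw [this]
          exact D.neg_mem hd
        rw [heq, hmk]
        exact ⟨_, rfl⟩
      · show p (e' - d) = n
        rw [map_sub, hpd]
        abel

/-- **Eklof Lemma.**  Let `R` be a ring, `𝓑` a class of `R`-modules, and `M` an
`R`-module admitting a filtration `(F α)_{α ≤ σ}` (an increasing continuous chain of
submodules with `F 0 = 0` and `F σ = M`) such that `Ext¹_R(F (α+1) / F α, B) = 0` for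
every `α < σ` and every `B ∈ 𝓑`.  Then `Ext¹_R(M, B) = 0` for every `B ∈ 𝓑`. -/
theorem stmt_2 (𝓑 : Set (ModuleCat.{u} R)) (M : ModuleCat.{u} R)
    (σ : Ordinal.{u}) (F : Ordinal.{u} → Submodule R M) (hF : IsOrdinalFiltration R σ F)
    (hquot : ∀ (α : Ordinal.{u}), α < σ → ∀ B ∈ 𝓑,
      Ext1Zero R (ModuleCat.of R (↥(F (α + 1)) ⧸
        (Submodule.comap (F (α + 1)).subtype (F α)))) B) :
    ∀ B ∈ 𝓑, Ext1Zero R M B := by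
  classical
  intro B hB E i p w hSE
  have hi : Function.Injective i := hSE.moduleCat_injective_f
  have hp : Function.Surjective p := hSE.moduleCat_surjective_g
  have hrange : LinearMap.range i.hom = LinearMap.ker p.hom := hSE.exact.moduleCat_range_eq_ker
  set S : Set (Submodule R E) :=
    {D | (∀ x ∈ D, p x = 0 → x = 0) ∧ ∃ α, α ≤ σ ∧ Submodule.map p.hom D = F α} with hS
  have hbot : (⊥ : Submodule R E) ∈ S := by
    refine ⟨fun x hx _ => by simpa using hx, 0, zero_le (a := σ), ?_⟩
    rw [Submodule.map_bot, hF.zero]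
  have hchain : ∀ c ⊆ S, IsChain (· ≤ ·) c → ∀ y ∈ c, ∃ ub ∈ S, ∀ z ∈ c, z ≤ ub := by
    intro c hcS hc y hyc
    refine ⟨sSup c, ?_, fun z hz => le_sSup hz⟩
    have hdir : DirectedOn (· ≤ ·) c := hc.directedOn
    have hne : c.Nonempty := ⟨y, hyc⟩
    haveI : Nonempty ↥c := ⟨⟨y, hyc⟩⟩
    constructor
    · intro x hx hpx
      rw [Submodule.mem_sSup_of_directed hne hdir] at hx
      obtain ⟨D, hDc, hxD⟩ := hx
      exact (hcS hDc).1 x hxD hpx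
    · choose a ha using fun D : c => (hcS D.2).2
      set γ : Ordinal.{u} := ⨆ D : c, a D with hγ
      have hbdd : BddAbove (Set.range fun D : c => a D) :=
        ⟨σ, by rintro _ ⟨D, rfl⟩; exact (ha D).1⟩
      have hγσ : γ ≤ σ := ciSup_le fun D => (ha D).1
      have hsup : Submodule.map p.hom (sSup c) = ⨆ D : c, F (a D) := by
        rw [sSup_eq_iSup', Submodule.map_iSup]
        congr 1
        funext D
        exact (ha D).2
      refine ⟨γ, hγσ, ?_⟩
      rw [hsup]
      by_cases hatt : ∃ D : c, a D = γ
      · obtain ⟨D₀, hD₀⟩ := hatt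
        apply le_antisymm
        · exact iSup_le fun D => hF.mono (le_ciSup hbdd D) hγσ
        · calc F γ = F (a D₀) := by rw [hD₀]
            _ ≤ ⨆ D : c, F (a D) := le_iSup (fun D : c => F (a D)) D₀
      · have hlim : Order.IsSuccLimit γ := by
          rw [Ordinal.isSuccLimit_iff, Order.isSuccPrelimit_iff_succ_lt]
          constructor
          · intro h0
            apply hatt
            refine ⟨⟨y, hyc⟩, ?_⟩
            exact le_antisymm (le_ciSup hbdd _) (h0 ▸ zero_le (a := _))
          · intro β hβ
            obtain ⟨D, hD⟩ := (lt_ciSup_iff hbdd).mp hβ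
            have h1 : a D < γ := lt_of_le_of_ne (le_ciSup hbdd D) (fun h => hatt ⟨D, h⟩)
            exact lt_of_le_of_lt (Order.succ_le_of_lt hD) h1
        rw [hF.limit hγσ hlim]
        apply le_antisymm
        · refine iSup_le fun D => ?_
          have h1 : a D < γ := lt_of_le_of_ne (le_ciSup hbdd D) (fun h => hatt ⟨D, h⟩)
          exact le_iSup₂ (f := fun (α : Ordinal.{u}) (_ : α < γ) => F α) (a D) h1
        · refine iSup₂_le fun α hα => ?_
          obtain ⟨D, hD⟩ := (lt_ciSup_iff hbdd).mp hα
          calc F α ≤ F (a D) := hF.mono hD.le (ha D).1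
            _ ≤ ⨆ D : c, F (a D) := le_iSup (fun D : c => F (a D)) D
  obtain ⟨Dm, -, hDmmax⟩ := zorn_le_nonempty₀ S hchain ⊥ hbot
  obtain ⟨hDinj, α₀, hα₀σ, hα₀⟩ := hDmmax.1
  have key : ∀ β, β ≤ σ → α₀ ≤ β → Submodule.map p.hom Dm = F β := by
    intro β
    induction β using Ordinal.induction with
    | h β IH =>
      intro hβσ hα₀β
      rcases eq_or_lt_of_le hα₀β with heq | hlt
      · rw [← heq]; exact hα₀
      rcases Ordinal.zero_or_succ_or_isSuccLimit β with h0 | ⟨γ, hγ⟩ | hlim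
      · exact absurd (h0 ▸ hlt) (not_lt_zero (a := α₀))
      · have hβ1 : β = γ + 1 := by rw [Ordinal.add_one_eq_succ]; exact hγ.symm
        subst hβ1
        have hγβ : γ < γ + 1 := by
          rw [Ordinal.add_one_eq_succ]; exact Order.lt_succ γ
        have hα₀γ : α₀ ≤ γ := by
          rw [Ordinal.add_one_eq_succ, Order.lt_succ_iff] at hlt; exact hlt
        have hγσ : γ < σ := lt_of_lt_of_le hγβ hβσ
        have hDγ := IH γ hγβ hγσ.le hα₀γ
        have hKN : F γ ≤ F (γ + 1) := hF.mono hγβ.le hβσ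
        obtain ⟨D', hDD', hD'inj, hD'map⟩ :=
          step R i p hi hp hrange hKN (hquot γ hγσ B hB) Dm hDinj hDγ
        have hD'S : D' ∈ S := ⟨hD'inj, γ + 1, hβσ, hD'map⟩
        have hEq : D' = Dm := le_antisymm (hDmmax.2 hD'S hDD') hDD'
        rw [← hEq, hD'map]
      · rw [hF.limit hβσ hlim]
        apply le_antisymm
        · rw [hα₀]
          exact le_iSup₂ (f := fun (α : Ordinal.{u}) (_ : α < β) => F α) α₀ hlt
        · refine iSup₂_le fun δ hδ => ?_
          rcases le_total δ α₀ with h | h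
          · calc F δ ≤ F α₀ := hF.mono h hα₀σ
              _ = Submodule.map p.hom Dm := hα₀.symm
          · exact (IH δ hδ (le_of_lt (lt_of_lt_of_le hδ hβσ)) h).ge
  have htop : Submodule.map p.hom Dm = ⊤ := by rw [key σ le_rfl hα₀σ, hF.top]
  have hbij : Function.Bijective (p.hom ∘ₗ Dm.subtype) := by
    constructor
    · intro x y hxy
      have hsub : p (x.1 - y.1) = 0 := by
        rw [map_sub]
        exact sub_eq_zero.mpr hxy
      have : x.1 - y.1 = 0 := hDinj _ (Dm.sub_mem x.2 y.2) hsub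
      exact Subtype.ext (sub_eq_zero.mp this)
    · intro m
      have hm : m ∈ Submodule.map p.hom Dm := htop ▸ Submodule.mem_top
      obtain ⟨d, hd, hpd⟩ := hm
      exact ⟨⟨d, hd⟩, hpd⟩
  set e := LinearEquiv.ofBijective (p.hom ∘ₗ Dm.subtype) hbij with he
  refine ⟨ModuleCat.ofHom (Dm.subtype ∘ₗ e.symm.toLinearMap), ?_⟩
  refine ModuleCat.hom_ext (LinearMap.ext fun m => ?_)
  show p (Dm.subtype (e.symm m)) = m
  exact e.apply_symm_apply m
end

section
/- (Neeman.) Let R be a ring, P a cochain complex of projective right R-modules, and W an acyclic cochain complex of flat right R-modules such that every cycle module Zⁿ(W) = ker(Wⁿ → W^{n+1}) is flat. Then every morphism of cochain complexes P → W is null-homotopic (chain homotopic to the zero map). -/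
open CategoryTheory CategoryTheory.Limits

universe u

/-- Flatness of a left module over an arbitrary (possibly noncommutative) ring,
expressed via the standard equational criterion, which is equivalent to the exactness
of the tensor product functor with `M`: whenever `∑ xⱼ • mⱼ = 0` with `xⱼ ∈ R`,
`mⱼ ∈ M`, there are `yᵢ ∈ M` and `aⱼᵢ ∈ R` with `mⱼ = ∑ᵢ aⱼᵢ • yᵢ` for all `j` and
`∑ⱼ xⱼ * aⱼᵢ = 0` for all `i`. -/
def IsFlat (R : Type u) [Ring R] (M : Type u) [AddCommGroup M] [Module R M] : Prop :=
  ∀ (k : ℕ) (x : Fin k → R) (m : Fin k → M), (∑ j, x j • m j) = 0 →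
    ∃ (l : ℕ) (a : Fin k → Fin l → R) (y : Fin l → M),
      (∀ j, m j = ∑ i, a j i • y i) ∧ ∀ i, (∑ j, x j * a j i) = 0

namespace Neeman

variable {R : Type u} [Ring R]

theorem sum_mul_sum_comm {α β : Type*} [Fintype α] [Fintype β]
    (p : α → R) (q : α → β → R) (r : β → R) :
    (∑ j, p j * ∑ i, q j i * r i) = ∑ i, (∑ j, p j * q j i) * r i := by
  simp only [Finset.mul_sum, Finset.sum_mul, mul_assoc]
  rw [Finset.sum_comm]

theorem sum_smul_smul_comm {M : Type u} [AddCommGroup M] [Module R M]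
    {α β : Type*} [Fintype α] [Fintype β]
    (p : α → R) (q : α → β → R) (v : β → M) :
    (∑ j, p j • ∑ i, q j i • v i) = ∑ i, (∑ j, p j * q j i) • v i := by
  simp only [Finset.smul_sum, Finset.sum_smul, mul_smul]
  rw [Finset.sum_comm]

theorem isFlat_of_equiv {M N : Type u} [AddCommGroup M] [Module R M]
    [AddCommGroup N] [Module R N] (e : M ≃ₗ[R] N) (hM : IsFlat R M) : IsFlat R N := by
  intro k x m hm
  obtain ⟨l, a, y, h1, h2⟩ := hM k x (fun j => e.symm (m j)) (by
    have : (∑ j, x j • e.symm (m j)) = e.symm (∑ j, x j • m j) := by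
      simp [map_sum, map_smul]
    rw [this, hm, map_zero])
  refine ⟨l, a, fun i => e (y i), fun j => ?_, h2⟩
  have := congrArg e (h1 j)
  simpa [map_sum, map_smul] using this

theorem multiflat {M : Type u} [AddCommGroup M] [Module R M] (hM : IsFlat R M) :
    ∀ (T k : ℕ) (x : Fin T → Fin k → R) (m : Fin k → M), (∀ t, (∑ j, x t j • m j) = 0) →
    ∃ (l : ℕ) (a : Fin k → Fin l → R) (y : Fin l → M),
      (∀ j, m j = ∑ i, a j i • y i) ∧ ∀ t i, (∑ j, x t j * a j i) = 0 := by
  intro T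
  induction T with
  | zero =>
    intro k x m _
    refine ⟨k, fun j i => if j = i then 1 else 0, m, fun j => ?_, fun t => t.elim0⟩
    simp
  | succ T ih =>
    intro k x m hx
    obtain ⟨l₁, a₁, y₁, h1, h2⟩ := hM k (x (Fin.last T)) m (hx _)
    have hy : ∀ t : Fin T, (∑ i, (∑ j, x t.castSucc j * a₁ j i) • y₁ i) = 0 := by
      intro t
      rw [← sum_smul_smul_comm]
      calc (∑ j, x t.castSucc j • ∑ i, a₁ j i • y₁ i)
          = ∑ j, x t.castSucc j • m j := by
            refine Finset.sum_congr rfl fun j _ => ?_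
            rw [← h1]
        _ = 0 := hx _
    obtain ⟨l, b, w, hb1, hb2⟩ := ih l₁ (fun t i => ∑ j, x t.castSucc j * a₁ j i) y₁ hy
    refine ⟨l, fun j u => ∑ i, a₁ j i * b i u, w, ?_, ?_⟩
    · intro j
      rw [h1 j, ← sum_smul_smul_comm]
      refine Finset.sum_congr rfl fun i _ => ?_
      rw [hb1 i]
    · intro t u
      have key : ∀ s : Fin (T+1), (∑ j, x s j * ∑ i, a₁ j i * b i u)
          = ∑ i, (∑ j, x s j * a₁ j i) * b i u := fun s => sum_mul_sum_comm _ _ _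
      refine Fin.lastCases ?_ (fun t => ?_) t
      · rw [key]
        refine Finset.sum_eq_zero fun i _ => ?_
        rw [h2 i, zero_mul]
      · rw [key]
        exact hb2 t u

theorem multiflat' {M : Type u} [AddCommGroup M] [Module R M] (hM : IsFlat R M)
    {J T : Type u} [Fintype J] [Fintype T]
    (x : T → J → R) (m : J → M) (hx : ∀ t, (∑ j, x t j • m j) = 0) :
    ∃ (l : ℕ) (a : J → Fin l → R) (y : Fin l → M),
      (∀ j, m j = ∑ i, a j i • y i) ∧ ∀ t i, (∑ j, x t j * a j i) = 0 := by
  classical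
  let eJ := Fintype.equivFin J
  let eT := Fintype.equivFin T
  obtain ⟨l, a, y, h1, h2⟩ := multiflat hM (Fintype.card T) (Fintype.card J)
    (fun t' j' => x (eT.symm t') (eJ.symm j')) (fun j' => m (eJ.symm j')) (by
      intro t'
      rw [← Equiv.sum_comp eJ (fun j' => x (eT.symm t') (eJ.symm j') • m (eJ.symm j'))]
      simp only [Equiv.symm_apply_apply]
      exact hx _)
  refine ⟨l, fun j i => a (eJ j) i, y, fun j => ?_, fun t i => ?_⟩
  · have := h1 (eJ j)
    simpa using this
  · have := h2 (eT t) i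
    rw [← Equiv.sum_comp eJ (fun j' => x (eT.symm (eT t)) (eJ.symm j') * a j' i)] at this
    simpa using this

section Core

variable {R : Type u} [Ring R] {V : ℕ → Type u} [∀ q, AddCommGroup (V q)] [∀ q, Module R (V q)]
  (dV : ∀ q, V q →ₗ[R] V (q+1))

/-- Purity lifting lemma: a finite family of cycles in `V (q+1)` satisfying finitely many
relations lifts to a family in `V q` (through `dV q`) satisfying the same relations. -/
theorem UPL (hex : ∀ q (x : V (q+1)), dV (q+1) x = 0 → ∃ y, dV q y = x)
    (hfl : ∀ q, IsFlat R ↥(LinearMap.ker (dV (q+1))))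
    (q : ℕ) {J T : Type u} [Fintype J] [Fintype T]
    (r : T → J → R) (ψ : J → V (q+1)) (hψ : ∀ j, dV (q+1) (ψ j) = 0)
    (hr : ∀ t, (∑ j, r t j • ψ j) = 0) :
    ∃ ρ : J → V q, (∀ j, dV q (ρ j) = ψ j) ∧ ∀ t, (∑ j, r t j • ρ j) = 0 := by
  obtain ⟨l, a, y, h1, h2⟩ := multiflat' (hfl q) r
    (fun j => (⟨ψ j, hψ j⟩ : LinearMap.ker (dV (q+1)))) (by
      intro t
      apply Subtype.ext
      push_cast
      simpa using hr t)
  choose v hv using fun i => hex q (y i).1 (y i).2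
  refine ⟨fun j => ∑ i, a j i • v i, fun j => ?_, fun t => ?_⟩
  · have := congrArg (Subtype.val) (h1 j)
    push_cast at this
    rw [map_sum]
    simp only [map_smul, hv]
    simpa using this.symm
  · rw [sum_smul_smul_comm]
    refine Finset.sum_eq_zero fun i _ => ?_
    rw [h2 t i, zero_smul]

variable {I : ℕ → Type u} [∀ q, Fintype (I q)]
  (Λ : ∀ q, I q → I (q+1) → R) (g : ∀ q, I q → V (q+1))

/-- The key correction step. -/
theorem KCstep (hdd : ∀ q (x : V q), dV (q+1) (dV q x) = 0)
    (hex : ∀ q (x : V (q+1)), dV (q+1) x = 0 → ∃ y, dV q y = x)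
    (hfl : ∀ q, IsFlat R ↥(LinearMap.ker (dV (q+1))))
    (hΛΛ : ∀ q (i : I q) (s : I (q+1+1)), (∑ j, Λ q i j * Λ (q+1) j s) = 0)
    (hg : ∀ q (i : I q), dV (q+1) (g q i) = ∑ j, Λ q i j • g (q+1) j)
    (q : ℕ) (c : I (q+1) → V (q+1))
    (hc : ∀ i : I q, (∑ j, Λ q i j • (g (q+1) j - dV (q+1) (c j))) = 0) :
    ∃ (c' : I (q+1) → V (q+1)) (v : I (q+1+1) → V (q+1+1)),
      (∀ i : I q, (∑ j, Λ q i j • c' j) = ∑ j, Λ q i j • c j) ∧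
      (∀ j, g (q+1) j = dV (q+1) (c' j) + ∑ s, Λ (q+1) j s • v s) := by
  -- Step 1
  obtain ⟨ρ, hρ1, hρ2⟩ := UPL dV hex hfl (q+1+1+1) (Λ (q+1))
      (fun s => dV (q+1+1+1) (g (q+1+1) s))
      (fun s => hdd _ _) (by
        intro j
        simp only [← map_smul, ← map_sum]
        rw [← hg (q+1) j, hdd])
  set b : I (q+1+1) → V (q+1+1+1) := fun s => g (q+1+1) s - ρ s with hb
  have hbz : ∀ s, dV (q+1+1+1) (b s) = 0 := by
    intro s; rw [hb]; simp only [map_sub, hρ1, sub_self]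
  have hbsum : ∀ j : I (q+1), (∑ s, Λ (q+1) j s • b s) = dV (q+1+1) (g (q+1) j) := by
    intro j
    rw [hb]
    simp only [smul_sub, Finset.sum_sub_distrib]
    rw [hρ2 j, sub_zero, hg (q+1) j]
  -- Step 2
  choose v hv using fun s => hex (q+1+1) (b s) (hbz s)
  -- Step 3
  set k : I (q+1) → V (q+1+1) := fun j => g (q+1) j - dV (q+1) (c j) with hk
  set z : I (q+1) → V (q+1+1) := fun j => k j - ∑ s, Λ (q+1) j s • v s with hz
  have hzc : ∀ j, dV (q+1+1) (z j) = 0 := by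
    intro j
    rw [hz, hk]
    simp only [map_sub, map_sum, map_smul, hv]
    rw [hbsum j]
    simp only [hdd]
    abel
  have hzrel : ∀ i : I q, (∑ j, Λ q i j • z j) = 0 := by
    intro i
    have e1 : (∑ j, Λ q i j • z j)
        = (∑ j, Λ q i j • (g (q+1) j - dV (q+1) (c j)))
          - ∑ j, Λ q i j • ∑ s, Λ (q+1) j s • v s := by
      rw [hz, hk]
      simp only [smul_sub, Finset.sum_sub_distrib]
      all_goals abel
    rw [e1, hc i,
      sum_smul_smul_comm (fun j => Λ q i j) (fun j s => Λ (q+1) j s) v,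
      zero_sub, neg_eq_zero]
    refine Finset.sum_eq_zero fun s _ => ?_
    rw [hΛΛ q i s, zero_smul]
  -- Step 4
  obtain ⟨δ, hδ1, hδ2⟩ := UPL dV hex hfl (q+1) (Λ q) z hzc hzrel
  refine ⟨fun j => c j + δ j, v, fun i => ?_, fun j => ?_⟩
  · simp only [smul_add, Finset.sum_add_distrib, hδ2 i, add_zero]
  · rw [map_add, hδ1 j]
    have hzj : z j = k j - ∑ s, Λ (q+1) j s • v s := by rw [hz]
    have hkj : k j = g (q+1) j - dV (q+1) (c j) := by rw [hk]
    rw [hzj, hkj]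
    abel

/-- Initial step. -/
theorem KCinit (hdd : ∀ q (x : V q), dV (q+1) (dV q x) = 0)
    (hex : ∀ q (x : V (q+1)), dV (q+1) x = 0 → ∃ y, dV q y = x)
    (hfl : ∀ q, IsFlat R ↥(LinearMap.ker (dV (q+1))))
    (hg : ∀ q (i : I q), dV (q+1) (g q i) = ∑ j, Λ q i j • g (q+1) j) :
    ∃ (x₀ : I 0 → V 0) (c₀ : I (0+1) → V (0+1)),
      ∀ i, g 0 i = dV 0 (x₀ i) + ∑ j, Λ 0 i j • c₀ j := by
  obtain ⟨ρ, hρ1, hρ2⟩ := UPL dV hex hfl (0+1+1) (Λ 0)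
      (fun s => dV (0+1+1) (g (0+1) s)) (fun s => hdd _ _) (by
        intro i
        simp only [← map_smul, ← map_sum]
        rw [← hg 0 i, hdd])
  set b : I (0+1) → V (0+1+1) := fun s => g (0+1) s - ρ s with hb
  have hbz : ∀ s, dV (0+1+1) (b s) = 0 := by
    intro s; rw [hb]; simp only [map_sub, hρ1, sub_self]
  have hbsum : ∀ i : I 0, (∑ s, Λ 0 i s • b s) = dV (0+1) (g 0 i) := by
    intro i
    rw [hb]
    simp only [smul_sub, Finset.sum_sub_distrib]
    rw [hρ2 i, sub_zero, hg 0 i]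
  choose v hv using fun s => hex (0+1) (b s) (hbz s)
  set z : I 0 → V (0+1) := fun i => g 0 i - ∑ s, Λ 0 i s • v s with hz
  have hzc : ∀ i, dV (0+1) (z i) = 0 := by
    intro i
    rw [hz]
    simp only [map_sub, map_sum, map_smul, hv]
    rw [hbsum i]
    abel
  choose x₀ hx₀ using fun i => hex 0 (z i) (hzc i)
  refine ⟨x₀, v, fun i => ?_⟩
  rw [hx₀ i]
  have hzi : z i = g 0 i - ∑ s, Λ 0 i s • v s := by rw [hz]
  rw [hzi]
  abel

/-- The core lemma: null-homotopy for a bounded-below levelwise-finite system. -/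
theorem core (hdd : ∀ q (x : V q), dV (q+1) (dV q x) = 0)
    (hex : ∀ q (x : V (q+1)), dV (q+1) x = 0 → ∃ y, dV q y = x)
    (hfl : ∀ q, IsFlat R ↥(LinearMap.ker (dV (q+1))))
    (hΛΛ : ∀ q (i : I q) (s : I (q+1+1)), (∑ j, Λ q i j * Λ (q+1) j s) = 0)
    (hg : ∀ q (i : I q), dV (q+1) (g q i) = ∑ j, Λ q i j • g (q+1) j) :
    ∃ x : ∀ q, I q → V q, ∀ q (i : I q),
      g q i = dV q (x q i) + ∑ j, Λ q i j • x (q+1) j := by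
  classical
  let St : ℕ → Type u := fun q =>
    {p : (I q → V q) × (I (q+1) → V (q+1)) //
      ∀ i, g q i = dV q (p.1 i) + ∑ j, Λ q i j • p.2 j}
  have step : ∀ q (s : St q),
      ∃ s' : St (q+1), ∀ i : I q, (∑ j, Λ q i j • s'.val.1 j) = ∑ j, Λ q i j • s.val.2 j := by
    intro q s
    have hc : ∀ i : I q, (∑ j, Λ q i j • (g (q+1) j - dV (q+1) (s.val.2 j))) = 0 := by
      intro i
      simp only [smul_sub, Finset.sum_sub_distrib]
      have h1 : (∑ j, Λ q i j • g (q+1) j) = dV (q+1) (g q i) := (hg q i).symm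
      have h2 : (∑ j, Λ q i j • dV (q+1) (s.val.2 j)) = dV (q+1) (∑ j, Λ q i j • s.val.2 j) := by
        simp only [map_sum, map_smul]
      rw [h1, h2, s.property i]
      simp only [map_add, hdd]
      abel
    obtain ⟨c', v, hcc, hrel⟩ := KCstep dV Λ g hdd hex hfl hΛΛ hg q s.val.2 hc
    exact ⟨⟨(c', v), hrel⟩, hcc⟩
  obtain ⟨x₀, c₀, h₀⟩ := KCinit dV Λ g hdd hex hfl hg
  let states : ∀ q, St q := fun q => Nat.rec ⟨(x₀, c₀), h₀⟩ (fun q s => (step q s).choose) q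
  have hcompat : ∀ q (i : I q),
      (∑ j, Λ q i j • (states (q+1)).val.1 j) = ∑ j, Λ q i j • (states q).val.2 j := by
    intro q i
    exact (step q (states q)).choose_spec i
  refine ⟨fun q => (states q).val.1, fun q i => ?_⟩
  rw [(states q).property i, hcompat q i]

end Core

end Neeman
section Main

variable {R : Type u} [Ring R]
variable {B : ℤ → Type u}
variable {Wt : ℤ → Type u} [∀ n, AddCommGroup (Wt n)] [∀ n, Module R (Wt n)]

/-- cast equivalence on the family `Wt`. -/
def ecastW (h : (a : ℤ) = b) : Wt a ≃ₗ[R] Wt b := h ▸ LinearEquiv.refl R (Wt a)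

@[simp] theorem ecastW_rfl {a : ℤ} (h : a = a) (x : Wt a) :
    ecastW (R := R) (Wt := Wt) h x = x := rfl

theorem ecastW_trans {a b c : ℤ} (h₁ : a = b) (h₂ : b = c) (x : Wt a) :
    ecastW (R := R) (Wt := Wt) h₂ (ecastW (R := R) h₁ x) = ecastW (R := R) (h₁.trans h₂) x := by
  subst h₁; subst h₂; rfl

/-- cast equivalence on the family `B`. -/
def ecastB (h : (a : ℤ) = b) : B a ≃ B b := Equiv.cast (congrArg B h)

@[simp] theorem ecastB_rfl {a : ℤ} (h : a = a) (x : B a) :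
    ecastB (B := B) h x = x := by
  simp [ecastB]

variable (B Wt) in
/-- The collection of all basis elements (of all degrees, shifted so that
an element of degree `n+1` is tagged by `n`). -/
abbrev Bas : Type u := Σ n : ℤ, B (n+1)

variable (DW : ∀ n : ℤ, Wt n →ₗ[R] Wt (n+1))
variable (sd : ∀ n : ℤ, B n → (B (n+1) →₀ R))
variable (fv : ∀ n : ℤ, B n → Wt n)

theorem ecastW_DW {a b : ℤ} (h : a = b) (x : Wt a) :
    DW b (ecastW (R := R) h x) = ecastW (R := R) (by rw [h]) (DW a x) := by
  subst h; rfl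

namespace Neeman2

/-- a canonical classical decidable equality, fixed once and for all -/
noncomputable def basDecEq {B : ℤ → Type u} : DecidableEq (Bas B) :=
  fun _ _ => Classical.propDecidable _

attribute [local instance] basDecEq

/-- successors of a tagged basis element -/
noncomputable def succ (p : Bas B) : Finset (Bas B) :=
  (sd (p.1+1) p.2).support.image (fun c => (⟨p.1+1, c⟩ : Bas B))

/-- connection coefficients -/
noncomputable def coef (p p' : Bas B) : R :=
  if h : p'.1 = p.1 + 1 then (sd (p.1+1) p.2) (ecastB (by rw [h]) p'.2) else 0

theorem coef_adj (n : ℤ) (b : B (n+1)) (c : B (n+1+1)) :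
    coef sd (⟨n, b⟩ : Bas B) (⟨n+1, c⟩ : Bas B) = (sd (n+1) b) c := by
  rw [coef, dif_pos rfl]
  simp

theorem coef_eq {p p' : Bas B} (h : p'.1 = p.1 + 1) :
    coef sd p p' = (sd (p.1+1) p.2) (ecastB (by rw [h]) p'.2) := dif_pos h

theorem coef_of_ne {p p' : Bas B} (h : ¬ p'.1 = p.1 + 1) : coef sd p p' = 0 := dif_neg h

/-- The homotopy equation at a basis element. -/
def Eqn (H : ∀ n : ℤ, B (n+1) → Wt n) (n : ℤ) (b : B (n+1)) : Prop :=
  fv (n+1) b = DW n (H n b) + (sd (n+1) b).sum fun c r => r • H (n+1) c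

/-- partial solutions -/
def Om : Type u := (∀ n : ℤ, Set (B (n+1))) × (∀ n : ℤ, B (n+1) → Wt n)

variable {DW sd fv} in
def IsSol (ω : Om (B := B) (Wt := Wt)) : Prop :=
  (∀ n b, b ∈ ω.1 n → ∀ c ∈ (sd (n+1) b).support, c ∈ ω.1 (n+1)) ∧
  (∀ n b, b ∈ ω.1 n → Eqn DW sd fv ω.2 n b)

variable {DW sd fv} in
def prel (s t : {ω : Om (B := B) (Wt := Wt) // IsSol (DW := DW) (sd := sd) (fv := fv) ω}) :
    Prop :=
  (∀ n, s.1.1 n ⊆ t.1.1 n) ∧ ∀ n b, b ∈ s.1.1 n → t.1.2 n b = s.1.2 n b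

theorem exists_maximal :
    ∃ m : {ω : Om (B := B) (Wt := Wt) // IsSol (DW := DW) (sd := sd) (fv := fv) ω},
      ∀ a, prel m a → prel a m := by
  classical
  apply exists_maximal_of_chains_bounded (r := prel)
  · intro ch hch
    by_cases hne : ch.Nonempty
    · -- upper bound of a nonempty chain
      refine ⟨⟨⟨fun n => {b | ∃ s ∈ ch, b ∈ s.1.1 n},
        fun n b => if h : ∃ s ∈ ch, b ∈ s.1.1 n then h.choose.1.2 n b else 0⟩, ?_, ?_⟩, ?_⟩
      · -- closed
        rintro n b ⟨s, hs, hbs⟩ c hc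
        exact ⟨s, hs, s.2.1 n b hbs c hc⟩
      · -- sat
        rintro n b ⟨s, hs, hbs⟩
        have key : ∀ (k : ℤ) (x : B (k+1)), x ∈ s.1.1 k →
            (if h : ∃ u ∈ ch, x ∈ u.1.1 k then h.choose.1.2 k x else 0) = s.1.2 k x := by
          intro k x hx
          have hex : ∃ u ∈ ch, x ∈ u.1.1 k := ⟨s, hs, hx⟩
          rw [dif_pos hex]
          obtain ⟨hu, hxu⟩ := hex.choose_spec
          rcases eq_or_ne hex.choose s with rfl | hne'
          · rfl
          · rcases hch hu hs hne' with h | h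
            · exact (h.2 k x hxu).symm
            · exact h.2 k x hx
        have hEq := s.2.2 n b hbs
        rw [Eqn] at hEq ⊢
        dsimp only
        rw [key n b hbs]
        rw [hEq]
        congr 1
        refine Finsupp.sum_congr fun c hc => ?_
        rw [key (n+1) c (s.2.1 n b hbs c hc)]
      · -- is upper bound
        intro s hs
        constructor
        · intro n b hb
          exact ⟨s, hs, hb⟩
        · intro n b hb
          have hex : ∃ u ∈ ch, b ∈ u.1.1 n := ⟨s, hs, hb⟩
          show (if h : ∃ u ∈ ch, b ∈ u.1.1 n then h.choose.1.2 n b else 0) = s.1.2 n b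
          rw [dif_pos hex]
          obtain ⟨hu, hbu⟩ := hex.choose_spec
          rcases eq_or_ne hex.choose s with rfl | hne'
          · rfl
          · rcases hch hu hs hne' with h | h
            · exact (h.2 n b hbu).symm
            · exact h.2 n b hb
    · -- empty chain : bottom element
      refine ⟨⟨⟨fun _ => ∅, fun _ _ => 0⟩, ?_, ?_⟩, ?_⟩
      · rintro n b ⟨⟩
      · rintro n b ⟨⟩
      · intro s hs
        exact absurd ⟨s, hs⟩ hne
  · intro a b c hab hbc
    exact ⟨fun n => (hab.1 n).trans (hbc.1 n),
      fun n x hx => (hbc.2 n x (hab.1 n hx)).trans (hab.2 n x hx)⟩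

end Neeman2

end Main
namespace Neeman2
section Ext

variable {R : Type u} [Ring R]
variable {B : ℤ → Type u}
variable {Wt : ℤ → Type u} [∀ n, AddCommGroup (Wt n)] [∀ n, Module R (Wt n)]
variable (DW : ∀ n : ℤ, Wt n →ₗ[R] Wt (n+1))
variable (sd : ∀ n : ℤ, B n → (B (n+1) →₀ R))
variable (fv : ∀ n : ℤ, B n → Wt n)
variable (dom : ∀ n : ℤ, Set (B (n+1))) (H0 : ∀ n : ℤ, B (n+1) → Wt n)

theorem finsupp_sum_eq {α : Type u} {M : Type u} {N : Type*} [Zero M] [AddCommMonoid N]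
    (f : α →₀ M) (g : α → M → N) : f.sum g = ∑ a ∈ f.support, g a (f a) := rfl

attribute [local instance] basDecEq

noncomputable def domDecP {B' : ℤ → Type u} (dom' : ∀ n : ℤ, Set (B' (n+1))) :
    ∀ n, DecidablePred (· ∈ dom' n) := fun _ _ => Classical.propDecidable _

attribute [local instance] domDecP

/-- The masked linear combination operator. -/
noncomputable def Mlc (k : ℤ) : (B (k+1) →₀ R) →ₗ[R] Wt k :=
  Finsupp.linearCombination R (fun c => if c ∈ dom k then H0 k c else 0)

theorem Mlc_apply (k : ℤ) (l : B (k+1) →₀ R) :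
    Mlc (R := R) dom H0 k l = ∑ c ∈ l.support, (if c ∈ dom k then l c • H0 k c else 0) := by
  rw [Mlc, Finsupp.linearCombination_apply, finsupp_sum_eq]
  refine Finset.sum_congr rfl fun c _ => ?_
  split_ifs <;> simp

/-- The corrected boundary value. -/
noncomputable def Gv (p : Bas B) : Wt (p.1+1) :=
  fv (p.1+1) p.2 - Mlc (R := R) dom H0 (p.1+1) (sd (p.1+1) p.2)

/-- Level sets of the closure of a single new element. -/
noncomputable def Lv (n₀ : ℤ) (b₀ : B (n₀+1)) : ℕ → Finset (Bas B)
  | 0 => {(⟨n₀, b₀⟩ : Bas B)}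
  | (q+1) => ((Lv n₀ b₀ q).biUnion (succ sd)).filter (fun p => p.2 ∉ dom p.1)

variable {sd dom}

theorem Lv_level {n₀ : ℤ} {b₀ : B (n₀+1)} :
    ∀ (q : ℕ) (p : Bas B), p ∈ Lv sd dom n₀ b₀ q → p.1 = n₀ + q := by
  intro q
  induction q with
  | zero =>
    intro p hp
    rw [Lv, Finset.mem_singleton] at hp
    subst hp
    simp
  | succ q ih =>
    intro p hp
    rw [Lv, Finset.mem_filter, Finset.mem_biUnion] at hp
    obtain ⟨⟨p', hp', hsucc⟩, -⟩ := hp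
    rw [succ, Finset.mem_image] at hsucc
    obtain ⟨c, -, rfl⟩ := hsucc
    have := ih p' hp'
    simp only
    rw [this]
    push_cast
    ring

theorem Lv_not_dom {n₀ : ℤ} {b₀ : B (n₀+1)} (hb₀ : b₀ ∉ dom n₀) :
    ∀ (q : ℕ) (p : Bas B), p ∈ Lv sd dom n₀ b₀ q → p.2 ∉ dom p.1 := by
  intro q
  cases q with
  | zero =>
    intro p hp
    rw [Lv, Finset.mem_singleton] at hp
    subst hp
    exact hb₀
  | succ q =>
    intro p hp
    rw [Lv, Finset.mem_filter] at hp
    exact hp.2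

theorem Lv_succ_mem {n₀ : ℤ} {b₀ : B (n₀+1)} {q : ℕ} {p : Bas B}
    (hp : p ∈ Lv sd dom n₀ b₀ q) {c : B (p.1+1+1)} (hc : c ∈ (sd (p.1+1) p.2).support)
    (hcd : c ∉ dom (p.1+1)) :
    (⟨p.1+1, c⟩ : Bas B) ∈ Lv sd dom n₀ b₀ (q+1) := by
  rw [Lv, Finset.mem_filter, Finset.mem_biUnion]
  exact ⟨⟨p, hp, by rw [succ, Finset.mem_image]; exact ⟨c, hc, rfl⟩⟩, hcd⟩

theorem Lv_unique {n₀ : ℤ} {b₀ : B (n₀+1)} {q q' : ℕ} {p : Bas B}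
    (h : p ∈ Lv sd dom n₀ b₀ q) (h' : p ∈ Lv sd dom n₀ b₀ q') : q = q' := by
  have h1 := Lv_level q p h
  have h2 := Lv_level q' p h'
  omega

theorem bas_eq (p : Bas B) {k : ℤ} (h : p.1 = k) :
    p = ⟨k, ecastB (by rw [h]) p.2⟩ := by
  cases p with
  | mk n b =>
    dsimp only at h
    subst h
    simp

variable {fv H0}

/-- The satisfaction equation rewritten through the mask. -/
theorem satM {DW : ∀ n : ℤ, Wt n →ₗ[R] Wt (n+1)}
    (hclosed : ∀ n b, b ∈ dom n → ∀ c ∈ (sd (n+1) b).support, c ∈ dom (n+1))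
    (hsat : ∀ n b, b ∈ dom n → Eqn DW sd fv H0 n b)
    {k : ℤ} {b : B (k+1)} (hb : b ∈ dom k) :
    DW k (H0 k b) = fv (k+1) b - Mlc (R := R) dom H0 (k+1) (sd (k+1) b) := by
  have h := hsat k b hb
  rw [Eqn] at h
  rw [Mlc_apply]
  rw [h, finsupp_sum_eq]
  have he : (∑ c ∈ (sd (k+1) b).support, (sd (k+1) b) c • H0 (k+1) c)
      = ∑ c ∈ (sd (k+1) b).support, (if c ∈ dom (k+1) then (sd (k+1) b) c • H0 (k+1) c else 0) := by
    refine Finset.sum_congr rfl fun c hc => ?_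
    rw [if_pos (hclosed k b hb c hc)]
  rw [he]
  abel

/-- Key zero-sum: masked double composition vanishes. -/
theorem key0
    (hsd2 : ∀ (n : ℤ) (b : B n), ((sd n b).sum fun c r => r • sd (n+1) c) = 0)
    (n : ℤ) (b : B (n+1)) :
    (∑ c ∈ (sd (n+1) b).support,
      (sd (n+1) b) c • Mlc (R := R) dom H0 (n+1+1) (sd (n+1+1) c)) = 0 := by
  have he : (∑ c ∈ (sd (n+1) b).support, (sd (n+1) b) c • Mlc (R := R) dom H0 (n+1+1) (sd (n+1+1) c))
      = Mlc (R := R) dom H0 (n+1+1) ((sd (n+1) b).sum fun c r => r • sd (n+1+1) c) := by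
    rw [finsupp_sum_eq, map_sum]
    refine Finset.sum_congr rfl fun c _ => ?_
    rw [map_smul]
  rw [he, hsd2 (n+1) b, map_zero]

/-- (L1): the chain identity for the corrected boundary values. -/
theorem L1 {DW : ∀ n : ℤ, Wt n →ₗ[R] Wt (n+1)}
    (hclosed : ∀ n b, b ∈ dom n → ∀ c ∈ (sd (n+1) b).support, c ∈ dom (n+1))
    (hsat : ∀ n b, b ∈ dom n → Eqn DW sd fv H0 n b)
    (hsd2 : ∀ (n : ℤ) (b : B n), ((sd n b).sum fun c r => r • sd (n+1) c) = 0)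
    (hfd : ∀ (n : ℤ) (b : B n), DW n (fv n b) = (sd n b).sum fun c r => r • fv (n+1) c)
    (n : ℤ) (b : B (n+1)) :
    DW (n+1) (Gv (R := R) sd fv dom H0 (⟨n, b⟩ : Bas B))
      = ∑ c ∈ (sd (n+1) b).support,
          (if c ∈ dom (n+1) then 0
            else (sd (n+1) b) c • Gv (R := R) sd fv dom H0 (⟨n+1, c⟩ : Bas B)) := by
  have hGv : ∀ (c : B (n+1+1)),
      Gv (R := R) sd fv dom H0 (⟨n+1, c⟩ : Bas B)
        = fv (n+1+1) c - Mlc (R := R) dom H0 (n+1+1) (sd (n+1+1) c) := fun c => rfl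
  have hmask : DW (n+1) (Mlc (R := R) dom H0 (n+1) (sd (n+1) b))
      = ∑ c ∈ (sd (n+1) b).support,
          (if c ∈ dom (n+1) then
            (sd (n+1) b) c • (fv (n+1+1) c - Mlc (R := R) dom H0 (n+1+1) (sd (n+1+1) c))
          else 0) := by
    rw [Mlc_apply, map_sum]
    refine Finset.sum_congr rfl fun c hc => ?_
    rw [apply_ite (DW (n+1)), map_zero, map_smul]
    by_cases hcd : c ∈ dom (n+1)
    · rw [if_pos hcd, if_pos hcd, satM hclosed hsat hcd]
    · rw [if_neg hcd, if_neg hcd]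
  have hkey := key0 (dom := dom) (H0 := H0) hsd2 n b
  show DW (n+1) (Gv (R := R) sd fv dom H0 (⟨n, b⟩ : Bas B)) = _
  rw [Gv]
  rw [map_sub, hfd (n+1) b, finsupp_sum_eq, hmask]
  rw [← Finset.sum_sub_distrib, ← sub_eq_zero, ← Finset.sum_sub_distrib]
  refine Eq.trans ?_ hkey
  refine Finset.sum_congr rfl fun c hc => ?_
  by_cases hcd : c ∈ dom (n+1)
  · rw [if_pos hcd, if_pos hcd, smul_sub]
    abel
  · rw [if_neg hcd, if_neg hcd, hGv c, smul_sub]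
    abel

/-- (L2): masked double-composition coefficient identity. -/
theorem L2
    (hclosed : ∀ n b, b ∈ dom n → ∀ c ∈ (sd (n+1) b).support, c ∈ dom (n+1))
    (hsd2 : ∀ (n : ℤ) (b : B n), ((sd n b).sum fun c r => r • sd (n+1) c) = 0)
    (n : ℤ) (b : B (n+1)) (c'' : B (n+1+1+1)) (hc'' : c'' ∉ dom (n+1+1)) :
    (∑ c ∈ (sd (n+1) b).support,
      (if c ∈ dom (n+1) then 0 else (sd (n+1) b) c * (sd (n+1+1) c) c'')) = 0 := by
  have step1 : (∑ c ∈ (sd (n+1) b).support,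
      (if c ∈ dom (n+1) then 0 else (sd (n+1) b) c * (sd (n+1+1) c) c''))
      = ∑ c ∈ (sd (n+1) b).support, (sd (n+1) b) c * (sd (n+1+1) c) c'' := by
    refine Finset.sum_congr rfl fun c hc => ?_
    by_cases hcd : c ∈ dom (n+1)
    · rw [if_pos hcd]
      have hns : c'' ∉ (sd (n+1+1) c).support := fun hmem => hc'' (hclosed (n+1) c hcd c'' hmem)
      rw [Finsupp.notMem_support_iff.mp hns, mul_zero]
    · rw [if_neg hcd]
  rw [step1]
  have h2 := congrArg (fun l => l c'') (hsd2 (n+1) b)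
  simpa only [finsupp_sum_eq, Finset.sum_apply', Finsupp.smul_apply, Finsupp.coe_zero,
    Pi.zero_apply, smul_eq_mul] using h2

/-- (L3): reindexing between the level set sum and the support sum. -/
theorem L3 {M : Type u} [AddCommMonoid M] {n₀ : ℤ} {b₀ : B (n₀+1)} (hb₀ : b₀ ∉ dom n₀)
    (q : ℕ) (p : Bas B) (hp : p ∈ Lv sd dom n₀ b₀ q) (Ψ : Bas B → M)
    (hΨ0 : ∀ p', coef sd p p' = 0 → Ψ p' = 0) :
    (∑ j ∈ Lv sd dom n₀ b₀ (q+1), Ψ j)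
      = ∑ c ∈ (sd (p.1+1) p.2).support,
          (if c ∈ dom (p.1+1) then 0 else Ψ ⟨p.1+1, c⟩) := by
  have hinj : Function.Injective (fun c : B (p.1+1+1) => (⟨p.1+1, c⟩ : Bas B)) :=
    fun x y hxy => sigma_mk_injective (β := fun n : ℤ => B (n+1)) hxy
  have step1 : (∑ j ∈ Lv sd dom n₀ b₀ (q+1), Ψ j)
      = ∑ j ∈ (Lv sd dom n₀ b₀ (q+1)).filter (fun j => j ∈ succ sd p), Ψ j := by
    rw [Finset.sum_filter_of_ne]
    intro j hj hΨj
    by_contra hns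
    apply hΨj
    apply hΨ0
    by_cases hlv : j.1 = p.1 + 1
    · rw [coef_eq (sd := sd) hlv]
      refine Finsupp.notMem_support_iff.mp ?_
      intro hmem
      apply hns
      rw [succ, Finset.mem_image]
      exact ⟨_, hmem, (bas_eq j hlv).symm⟩
    · exact coef_of_ne (sd := sd) hlv
  have step2 : (Lv sd dom n₀ b₀ (q+1)).filter (fun j => j ∈ succ sd p)
      = ((sd (p.1+1) p.2).support.filter (fun c => c ∉ dom (p.1+1))).image
          (fun c => (⟨p.1+1, c⟩ : Bas B)) := by
    ext j
    simp only [Finset.mem_filter, Finset.mem_image]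
    constructor
    · rintro ⟨hjL, hjs⟩
      rw [succ, Finset.mem_image] at hjs
      obtain ⟨c, hc, rfl⟩ := hjs
      refine ⟨c, ⟨hc, ?_⟩, rfl⟩
      exact Lv_not_dom hb₀ (q+1) _ hjL
    · rintro ⟨c, ⟨hc, hcd⟩, rfl⟩
      exact ⟨Lv_succ_mem hp hc hcd, by rw [succ, Finset.mem_image]; exact ⟨c, hc, rfl⟩⟩
  rw [step1, step2, Finset.sum_image (fun x _ y _ h => hinj h), Finset.sum_filter]
  refine Finset.sum_congr rfl fun c _ => ?_
  by_cases hcd : c ∈ dom (p.1+1)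
  · rw [if_neg (by simpa using hcd), if_pos hcd]
  · rw [if_pos hcd, if_neg hcd]

end Ext
end Neeman2
namespace Neeman2
section Ext2
variable {R : Type u} [Ring R]
variable {B : ℤ → Type u}
variable {dom : ∀ n : ℤ, Set (B (n+1))}

theorem dom_cast {a b : ℤ} (h : a = b) (x : B (a+1)) :
    ecastB (show a+1 = b+1 by rw [h]) x ∈ dom b ↔ x ∈ dom a := by
  subst h
  simp

theorem coef_adj' {sd : ∀ n : ℤ, B n → (B (n+1) →₀ R)} (p : Bas B) (c : B (p.1+1+1)) :
    coef sd p (⟨p.1+1, c⟩ : Bas B) = (sd (p.1+1) p.2) c := by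
  rw [coef_eq (sd := sd) rfl]
  simp

end Ext2
end Neeman2
namespace Neeman2
section Shift

variable {R : Type u} [Ring R]
variable {Wt : ℤ → Type u} [∀ n, AddCommGroup (Wt n)] [∀ n, Module R (Wt n)]
variable (DW : ∀ n : ℤ, Wt n →ₗ[R] Wt (n+1))

variable (Wt) in
/-- the shifted ℕ-indexed family -/
abbrev Vsh (n₀ : ℤ) (q : ℕ) : Type u := Wt (n₀ + (q : ℤ))

/-- the shifted differential -/
noncomputable def dVsh (n₀ : ℤ) (q : ℕ) : Vsh Wt n₀ q →ₗ[R] Vsh Wt n₀ (q+1) :=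
  (ecastW (R := R) (by push_cast; ring)).toLinearMap.comp (DW (n₀ + (q : ℤ)))

theorem dVsh_apply (n₀ : ℤ) (q : ℕ) (x : Vsh Wt n₀ q) :
    dVsh DW n₀ q x = ecastW (R := R) (by push_cast; ring) (DW (n₀ + (q : ℤ)) x) := rfl

theorem dVsh_dd (hDD : ∀ n (x : Wt n), DW (n+1) (DW n x) = 0) (n₀ : ℤ) :
    ∀ (q : ℕ) (x : Vsh Wt n₀ q), dVsh DW n₀ (q+1) (dVsh DW n₀ q x) = 0 := by
  intro q x
  rw [dVsh_apply, dVsh_apply, ecastW_DW, ecastW_trans, hDD, map_zero]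

theorem dVsh_ex (hEX : ∀ n (x : Wt (n+1)), DW (n+1) x = 0 → ∃ y, DW n y = x) (n₀ : ℤ) :
    ∀ (q : ℕ) (x : Vsh Wt n₀ (q+1)), dVsh DW n₀ (q+1) x = 0 → ∃ y, dVsh DW n₀ q y = x := by
  intro q x hx
  rw [dVsh_apply, LinearEquiv.map_eq_zero_iff] at hx
  set x' : Wt (n₀ + (q:ℤ) + 1) := ecastW (R := R) (by push_cast; ring) x with hxd
  have h0 : DW (n₀ + (q:ℤ) + 1) x' = 0 := by
    rw [hxd, ecastW_DW, hx, map_zero]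
  obtain ⟨y, hy⟩ := hEX (n₀ + (q:ℤ)) x' h0
  refine ⟨y, ?_⟩
  rw [dVsh_apply, hy, hxd, ecastW_trans]
  exact ecastW_rfl _ _

theorem dVsh_fl (hFL : ∀ n : ℤ, IsFlat R ↥(LinearMap.ker (DW n))) (n₀ : ℤ) :
    ∀ (q : ℕ), IsFlat R ↥(LinearMap.ker (dVsh DW n₀ (q+1))) := by
  intro q
  have hker : LinearMap.ker (dVsh DW n₀ (q+1))
      = LinearMap.ker (DW (n₀ + ((q:ℕ)+1 : ℕ))) := by
    rw [dVsh, LinearMap.ker_comp, LinearEquiv.ker, Submodule.comap_bot]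
  exact Neeman.isFlat_of_equiv (LinearEquiv.ofEq _ _ hker.symm) (hFL _)

end Shift
end Neeman2
namespace Neeman2
section Extend

variable {R : Type u} [Ring R]
variable {B : ℤ → Type u}
variable {Wt : ℤ → Type u} [∀ n, AddCommGroup (Wt n)] [∀ n, Module R (Wt n)]
variable (DW : ∀ n : ℤ, Wt n →ₗ[R] Wt (n+1))
variable (sd : ∀ n : ℤ, B n → (B (n+1) →₀ R))
variable (fv : ∀ n : ℤ, B n → Wt n)
variable (dom : ∀ n : ℤ, Set (B (n+1))) (H0 : ∀ n : ℤ, B (n+1) → Wt n)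
variable (n₀ : ℤ) (b₀ : B (n₀+1))

attribute [local instance] basDecEq domDecP

abbrev Iq (q : ℕ) : Type u := ↥(Lv sd dom n₀ b₀ q)

noncomputable def Λq (q : ℕ) (i : Iq sd dom n₀ b₀ q) (j : Iq sd dom n₀ b₀ (q+1)) : R :=
  coef sd i.1 j.1

noncomputable def gq (q : ℕ) (i : Iq sd dom n₀ b₀ q) : Vsh Wt n₀ (q+1) :=
  ecastW (R := R)
    (show i.1.1 + 1 = n₀ + ((q+1 : ℕ) : ℤ) by
      have := Lv_level (sd := sd) (dom := dom) q i.1 i.2; omega)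
    (Gv sd fv dom H0 i.1)

theorem Λq_comp
    (hclosed : ∀ n b, b ∈ dom n → ∀ c ∈ (sd (n+1) b).support, c ∈ dom (n+1))
    (hsd2 : ∀ (n : ℤ) (b : B n), ((sd n b).sum fun c r => r • sd (n+1) c) = 0)
    (hb₀ : b₀ ∉ dom n₀) (q : ℕ)
    (i : Iq sd dom n₀ b₀ q) (s : Iq sd dom n₀ b₀ (q+1+1)) :
    (∑ j, Λq sd dom n₀ b₀ q i j * Λq sd dom n₀ b₀ (q+1) j s) = 0 := by
  have e2 : s.1.1 = i.1.1 + 1 + 1 := by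
    have hi := Lv_level (sd := sd) (dom := dom) q i.1 i.2
    have hs := Lv_level (sd := sd) (dom := dom) (q+1+1) s.1 s.2
    omega
  have hstep : (∑ j, Λq sd dom n₀ b₀ q i j * Λq sd dom n₀ b₀ (q+1) j s)
      = ∑ j : Iq sd dom n₀ b₀ (q+1), (fun p' => coef sd i.1 p' * coef sd p' s.1) j.1 := rfl
  rw [hstep, Finset.sum_coe_sort _ (fun p' => coef sd i.1 p' * coef sd p' s.1), L3 hb₀ q i.1 i.2 (fun p' => coef sd i.1 p' * coef sd p' s.1)
    (fun p' h => by rw [h, zero_mul])]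
  refine Eq.trans ?_
    (L2 hclosed hsd2 i.1.1 i.1.2 (ecastB (show s.1.1+1 = i.1.1+1+1+1 by rw [e2]) s.1.2) ?_)
  · refine Finset.sum_congr rfl fun c hc => ?_
    by_cases hcd : c ∈ dom (i.1.1+1)
    · rw [if_pos hcd, if_pos hcd]
    · rw [if_neg hcd, if_neg hcd, coef_adj' (sd := sd) i.1 c, coef_eq (sd := sd) e2]
  · rw [dom_cast (dom := dom) e2]
    exact Lv_not_dom hb₀ _ s.1 s.2

theorem gq_chain
    (hclosed : ∀ n b, b ∈ dom n → ∀ c ∈ (sd (n+1) b).support, c ∈ dom (n+1))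
    (hsat : ∀ n b, b ∈ dom n → Eqn DW sd fv H0 n b)
    (hsd2 : ∀ (n : ℤ) (b : B n), ((sd n b).sum fun c r => r • sd (n+1) c) = 0)
    (hfd : ∀ (n : ℤ) (b : B n), DW n (fv n b) = (sd n b).sum fun c r => r • fv (n+1) c)
    (hb₀ : b₀ ∉ dom n₀) (q : ℕ) (i : Iq sd dom n₀ b₀ q) :
    dVsh DW n₀ (q+1) (gq sd fv dom H0 n₀ b₀ q i)
      = ∑ j, Λq sd dom n₀ b₀ q i j • gq sd fv dom H0 n₀ b₀ (q+1) j := by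
  obtain ⟨p, hp⟩ := i
  obtain ⟨n, b⟩ := p
  have hn : n = n₀ + (q : ℤ) := Lv_level (sd := sd) (dom := dom) q _ hp
  have E : n + 1 + 1 = n₀ + ((q+1+1 : ℕ) : ℤ) := by omega
  -- the globalized summand
  set Ψ : Bas B → Vsh Wt n₀ (q+1+1) := fun p' =>
    if h : p'.1 = n + 1 then
      coef sd (⟨n, b⟩ : Bas B) p' •
        ecastW (R := R) (show p'.1 + 1 = n₀ + ((q+1+1 : ℕ) : ℤ) by rw [h]; omega) (Gv sd fv dom H0 p')
    else 0 with hΨ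
  have hΨ0 : ∀ p', coef sd (⟨n, b⟩ : Bas B) p' = 0 → Ψ p' = 0 := by
    intro p' h
    rw [hΨ]
    dsimp only
    split_ifs with hh
    · rw [h, zero_smul]
    · rfl
  have lhs1 : dVsh DW n₀ (q+1) (gq sd fv dom H0 n₀ b₀ q ⟨⟨n, b⟩, hp⟩)
      = ecastW (R := R) E (DW (n+1) (Gv sd fv dom H0 (⟨n, b⟩ : Bas B))) := by
    rw [dVsh_apply, gq, ecastW_DW, ecastW_trans]
  rw [lhs1, L1 hclosed hsat hsd2 hfd n b, map_sum]
  have lhs2 : (∑ c ∈ (sd (n+1) b).support,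
      ecastW (R := R) E (if c ∈ dom (n+1) then 0
        else (sd (n+1) b) c • Gv sd fv dom H0 (⟨n+1, c⟩ : Bas B)))
      = ∑ c ∈ (sd (n+1) b).support,
        (if c ∈ dom (n+1) then 0 else Ψ ⟨n+1, c⟩) := by
    refine Finset.sum_congr rfl fun c hc => ?_
    rw [apply_ite (ecastW (R := R) E), map_zero, map_smul]
    by_cases hcd : c ∈ dom (n+1)
    · rw [if_pos hcd, if_pos hcd]
    · rw [if_neg hcd, if_neg hcd, hΨ]
      dsimp only
      rw [dif_pos rfl, coef_adj']
  rw [lhs2, ← L3 hb₀ q (⟨n, b⟩ : Bas B) hp Ψ hΨ0, ← Finset.sum_coe_sort _ Ψ]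
  refine Finset.sum_congr rfl fun j _ => ?_
  have hj : j.1.1 = n + 1 := by
    have := Lv_level (sd := sd) (dom := dom) (q+1) j.1 j.2
    omega
  rw [hΨ]
  dsimp only
  rw [dif_pos hj]
  rfl

end Extend
end Neeman2
namespace Neeman2
section ExtendThm

variable {R : Type u} [Ring R]
variable {B : ℤ → Type u}
variable {Wt : ℤ → Type u} [∀ n, AddCommGroup (Wt n)] [∀ n, Module R (Wt n)]
variable {DW : ∀ n : ℤ, Wt n →ₗ[R] Wt (n+1)}
variable {sd : ∀ n : ℤ, B n → (B (n+1) →₀ R)}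
variable {fv : ∀ n : ℤ, B n → Wt n}
variable {dom : ∀ n : ℤ, Set (B (n+1))} {H0 : ∀ n : ℤ, B (n+1) → Wt n}
variable {n₀ : ℤ} {b₀ : B (n₀+1)}

attribute [local instance] basDecEq domDecP

theorem extend
    (hDD : ∀ n (x : Wt n), DW (n+1) (DW n x) = 0)
    (hEX : ∀ n (x : Wt (n+1)), DW (n+1) x = 0 → ∃ y, DW n y = x)
    (hFL : ∀ n : ℤ, IsFlat R ↥(LinearMap.ker (DW n)))
    (hsd2 : ∀ (n : ℤ) (b : B n), ((sd n b).sum fun c r => r • sd (n+1) c) = 0)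
    (hfd : ∀ (n : ℤ) (b : B n), DW n (fv n b) = (sd n b).sum fun c r => r • fv (n+1) c)
    (hclosed : ∀ n b, b ∈ dom n → ∀ c ∈ (sd (n+1) b).support, c ∈ dom (n+1))
    (hsat : ∀ n b, b ∈ dom n → Eqn DW sd fv H0 n b)
    (hb₀ : b₀ ∉ dom n₀) :
    ∃ (dom' : ∀ n : ℤ, Set (B (n+1))) (H' : ∀ n : ℤ, B (n+1) → Wt n),
      (∀ n b, b ∈ dom' n → ∀ c ∈ (sd (n+1) b).support, c ∈ dom' (n+1)) ∧
      (∀ n b, b ∈ dom' n → Eqn DW sd fv H' n b) ∧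
      (∀ n, dom n ⊆ dom' n) ∧ (∀ n b, b ∈ dom n → H' n b = H0 n b) ∧ b₀ ∈ dom' n₀ := by
  classical
  obtain ⟨x, hx⟩ := Neeman.core (V := Vsh Wt n₀) (dVsh DW n₀) (Λq sd dom n₀ b₀)
    (gq sd fv dom H0 n₀ b₀)
    (dVsh_dd DW hDD n₀) (dVsh_ex DW hEX n₀) (dVsh_fl DW hFL n₀)
    (Λq_comp sd dom n₀ b₀ hclosed hsd2 hb₀)
    (gq_chain DW sd fv dom H0 n₀ b₀ hclosed hsat hsd2 hfd hb₀)
  set H' : ∀ n : ℤ, B (n+1) → Wt n := fun n b =>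
    if h : ∃ q, (⟨n, b⟩ : Bas B) ∈ Lv sd dom n₀ b₀ q then
      ecastW (R := R)
        ((Lv_level (sd := sd) (dom := dom) h.choose _ h.choose_spec).symm)
        (x h.choose ⟨⟨n, b⟩, h.choose_spec⟩)
    else H0 n b with hH'def
  have H'val : ∀ (q : ℕ) (p : Bas B) (hp : p ∈ Lv sd dom n₀ b₀ q),
      H' p.1 p.2 = ecastW (R := R)
        ((Lv_level (sd := sd) (dom := dom) q p hp).symm) (x q ⟨p, hp⟩) := by
    intro q p hp
    have hE : ∃ q', p ∈ Lv sd dom n₀ b₀ q' := ⟨q, hp⟩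
    have haux : ∀ (q' : ℕ) (hq' : p ∈ Lv sd dom n₀ b₀ q') (e : q' = q),
        ecastW (R := R) ((Lv_level (sd := sd) (dom := dom) q' p hq').symm) (x q' ⟨p, hq'⟩)
          = ecastW (R := R) ((Lv_level (sd := sd) (dom := dom) q p hp).symm) (x q ⟨p, hp⟩) := by
      rintro q' hq' rfl
      rfl
    calc H' p.1 p.2
        = ecastW (R := R) ((Lv_level (sd := sd) (dom := dom) hE.choose _ hE.choose_spec).symm)
            (x hE.choose ⟨p, hE.choose_spec⟩) := by
          rw [hH'def]
          exact dif_pos hE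
      _ = _ := haux hE.choose hE.choose_spec (Lv_unique hE.choose_spec hp)
  have keyB : ∀ n b, b ∈ dom n → H' n b = H0 n b := by
    intro n b hb
    rw [hH'def]
    refine dif_neg ?_
    rintro ⟨q, hq⟩
    exact Lv_not_dom hb₀ q _ hq hb
  refine ⟨fun n => dom n ∪ {b | ∃ q, (⟨n, b⟩ : Bas B) ∈ Lv sd dom n₀ b₀ q}, H', ?_, ?_, ?_, keyB, ?_⟩
  · -- closed
    rintro n b (hb | ⟨q, hq⟩) c hc
    · exact Or.inl (hclosed n b hb c hc)
    · by_cases hcd : c ∈ dom (n+1)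
      · exact Or.inl hcd
      · exact Or.inr ⟨q+1, Lv_succ_mem hq hc hcd⟩
  · -- sat
    rintro n b (hb | ⟨q, hq⟩)
    · have h := hsat n b hb
      rw [Eqn] at h ⊢
      rw [keyB n b hb, h]
      congr 1
      refine Finsupp.sum_congr fun c hc => ?_
      rw [keyB (n+1) c (hclosed n b hb c hc)]
    · -- the new elements
      have hn : n = n₀ + (q : ℤ) := Lv_level (sd := sd) (dom := dom) q _ hq
      have e' : n₀ + ((q+1 : ℕ) : ℤ) = n + 1 := by omega
      have hxq := hx q ⟨⟨n, b⟩, hq⟩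
      -- piece 1
      have p1 : ecastW (R := R) e' (gq sd fv dom H0 n₀ b₀ q ⟨⟨n, b⟩, hq⟩)
          = Gv sd fv dom H0 (⟨n, b⟩ : Bas B) := by
        rw [gq, ecastW_trans]
        exact ecastW_rfl _ _
      -- piece 2
      have p2 : ecastW (R := R) e' (dVsh DW n₀ q (x q ⟨⟨n, b⟩, hq⟩))
          = DW n (H' n b) := by
        rw [dVsh_apply, ecastW_trans, H'val q ⟨n, b⟩ hq, ecastW_DW]
      -- the globalized summand
      set Ψ' : Bas B → Wt (n+1) := fun p' =>
        if h : p'.1 = n + 1 then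
          coef sd (⟨n, b⟩ : Bas B) p' • ecastW (R := R) h (H' p'.1 p'.2)
        else 0 with hΨ'
      have hΨ'0 : ∀ p', coef sd (⟨n, b⟩ : Bas B) p' = 0 → Ψ' p' = 0 := by
        intro p' h
        rw [hΨ']
        dsimp only
        split_ifs with hh
        · rw [h, zero_smul]
        · rfl
      -- piece 3
      have p3 : ecastW (R := R) e'
            (∑ j, Λq sd dom n₀ b₀ q ⟨⟨n, b⟩, hq⟩ j • x (q+1) j)
          = ∑ c ∈ (sd (n+1) b).support,
              (if c ∈ dom (n+1) then 0 else (sd (n+1) b) c • H' (n+1) c) := by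
        rw [map_sum]
        have e1 : ∀ j : Iq sd dom n₀ b₀ (q+1),
            ecastW (R := R) e' (Λq sd dom n₀ b₀ q ⟨⟨n, b⟩, hq⟩ j • x (q+1) j) = Ψ' j.1 := by
          intro j
          have hj : j.1.1 = n + 1 := by
            have := Lv_level (sd := sd) (dom := dom) (q+1) j.1 j.2
            omega
          rw [map_smul, hΨ']
          dsimp only
          rw [dif_pos hj, H'val (q+1) j.1 j.2, ecastW_trans]
          rfl
        rw [Finset.sum_congr rfl (fun j _ => e1 j), Finset.sum_coe_sort _ Ψ',
          L3 hb₀ q (⟨n, b⟩ : Bas B) hq Ψ' hΨ'0]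
        refine Finset.sum_congr rfl fun c hc => ?_
        by_cases hcd : c ∈ dom (n+1)
        · rw [if_pos hcd, if_pos hcd]
        · rw [if_neg hcd, if_neg hcd, hΨ']
          dsimp only
          rw [dif_pos rfl, coef_adj']
          rw [ecastW_rfl]
      -- assemble
      have main : Gv sd fv dom H0 (⟨n, b⟩ : Bas B)
          = DW n (H' n b) + ∑ c ∈ (sd (n+1) b).support,
              (if c ∈ dom (n+1) then 0 else (sd (n+1) b) c • H' (n+1) c) := by
        rw [← p1, hxq, map_add, p2, p3]
      rw [Eqn]
      have hGv : Gv sd fv dom H0 (⟨n, b⟩ : Bas B)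
          = fv (n+1) b - Mlc (R := R) dom H0 (n+1) (sd (n+1) b) := rfl
      rw [hGv] at main
      have hsum : ((sd (n+1) b).sum fun c r => r • H' (n+1) c)
          = Mlc (R := R) dom H0 (n+1) (sd (n+1) b)
            + ∑ c ∈ (sd (n+1) b).support,
                (if c ∈ dom (n+1) then 0 else (sd (n+1) b) c • H' (n+1) c) := by
        rw [Mlc_apply, finsupp_sum_eq, ← Finset.sum_add_distrib]
        refine Finset.sum_congr rfl fun c hc => ?_
        by_cases hcd : c ∈ dom (n+1)
        · rw [if_pos hcd, if_pos hcd, keyB (n+1) c hcd, add_zero]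
        · rw [if_neg hcd, if_neg hcd, zero_add]
      rw [hsum]
      rw [sub_eq_iff_eq_add] at main
      rw [main]
      abel
  · -- dom extends
    intro n
    exact Set.subset_union_left
  · -- b₀ covered
    exact Or.inr ⟨0, by rw [Lv]; exact Finset.mem_singleton_self _⟩

end ExtendThm
end Neeman2
namespace Neeman2
section MainComb

variable {R : Type u} [Ring R]
variable {B : ℤ → Type u}
variable {Wt : ℤ → Type u} [∀ n, AddCommGroup (Wt n)] [∀ n, Module R (Wt n)]
variable {DW : ∀ n : ℤ, Wt n →ₗ[R] Wt (n+1)}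
variable {sd : ∀ n : ℤ, B n → (B (n+1) →₀ R)}
variable {fv : ∀ n : ℤ, B n → Wt n}

/-- The main combinatorial theorem: the homotopy equations admit a global solution. -/
theorem mainComb
    (hDD : ∀ n (x : Wt n), DW (n+1) (DW n x) = 0)
    (hEX : ∀ n (x : Wt (n+1)), DW (n+1) x = 0 → ∃ y, DW n y = x)
    (hFL : ∀ n : ℤ, IsFlat R ↥(LinearMap.ker (DW n)))
    (hsd2 : ∀ (n : ℤ) (b : B n), ((sd n b).sum fun c r => r • sd (n+1) c) = 0)
    (hfd : ∀ (n : ℤ) (b : B n), DW n (fv n b) = (sd n b).sum fun c r => r • fv (n+1) c) :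
    ∃ H : ∀ n : ℤ, B (n+1) → Wt n, ∀ (n : ℤ) (b : B (n+1)), Eqn DW sd fv H n b := by
  obtain ⟨m, hm⟩ := exists_maximal DW sd fv
  have htot : ∀ (n : ℤ) (b : B (n+1)), b ∈ m.1.1 n := by
    by_contra h
    push_neg at h
    obtain ⟨n₀, b₀, hb₀⟩ := h
    obtain ⟨dom', H', hclosed', hsat', hsub, hagree, hb₀'⟩ :=
      extend (dom := m.1.1) (H0 := m.1.2) hDD hEX hFL hsd2 hfd m.2.1 m.2.2 hb₀
    have hle : prel m ⟨(dom', H'), hclosed', hsat'⟩ := ⟨hsub, hagree⟩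
    exact hb₀ ((hm _ hle).1 n₀ hb₀')
  exact ⟨m.1.2, fun n b => m.2.2 n b (htot n b)⟩

end MainComb
end Neeman2

open HomologicalComplex

/-- **(Neeman.)**  Let `R` be a ring, `P` a cochain complex of projective `R`-modules,
and `W` an acyclic cochain complex of flat `R`-modules such that every cycle module
`Zⁿ(W) = ker(Wⁿ → W^{n+1})` is flat.  Then every morphism of cochain complexes
`P → W` is null-homotopic. -/
theorem stmt_15 (R : Type u) [Ring R]
    (P W : CochainComplex (ModuleCat.{u} R) ℤ)
    (hP : ∀ n : ℤ, Projective (P.X n))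
    (hWac : ∀ n : ℤ, W.ExactAt n)
    (hWflat : ∀ n : ℤ, IsFlat R ↥(W.X n))
    (hWcyc : ∀ n : ℤ, IsFlat R ↥(W.cycles n))
    (f : P ⟶ W) : Nonempty (Homotopy f 0) := by
  classical
  -- sections of the canonical free covers
  have hproj : ∀ n : ℤ, Module.Projective R ↥(P.X n) := fun n =>
    (IsProjective.iff_projective _).mpr (hP n)
  choose σ hσ using fun n : ℤ => Module.projective_def.mp (hproj n)
  -- the key linearity lemma
  have key : ∀ (n : ℤ) {N : Type u} [AddCommGroup N] [Module R N]
      (T : ↥(P.X n) →ₗ[R] N) (l : ↥(P.X n) →₀ R),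
      (l.sum fun c r => r • T c) = T (Finsupp.linearCombination R id l) := by
    intro n N _ _ T l
    rw [Finsupp.linearCombination_apply, map_finsuppSum]
    refine Finsupp.sum_congr fun c hc => ?_
    rw [map_smul]
    rfl
  -- basic differential facts
  have hDD : ∀ (n : ℤ) (x : ↥(W.X n)), W.d (n+1) (n+1+1) (W.d n (n+1) x) = 0 := by
    intro n x
    have h := W.d_comp_d n (n+1) (n+1+1)
    calc W.d (n+1) (n+1+1) (W.d n (n+1) x) = (W.d n (n+1) ≫ W.d (n+1) (n+1+1)) x := rfl
      _ = (0 : W.X n ⟶ W.X (n+1+1)) x := by rw [h]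
      _ = 0 := rfl
  have hPDD : ∀ (n : ℤ) (x : ↥(P.X n)), P.d (n+1) (n+1+1) (P.d n (n+1) x) = 0 := by
    intro n x
    have h := P.d_comp_d n (n+1) (n+1+1)
    calc P.d (n+1) (n+1+1) (P.d n (n+1) x) = (P.d n (n+1) ≫ P.d (n+1) (n+1+1)) x := rfl
      _ = (0 : P.X n ⟶ P.X (n+1+1)) x := by rw [h]
      _ = 0 := rfl
  have hEX : ∀ (n : ℤ) (x : ↥(W.X (n+1))), W.d (n+1) (n+1+1) x = 0 →
      ∃ y : ↥(W.X n), W.d n (n+1) y = x := by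
    intro n x hx
    have h := hWac (n+1)
    rw [W.exactAt_iff' n (n+1) (n+1+1) (by simp) (by simp)] at h
    exact (ShortComplex.moduleCat_exact_iff _).1 h x hx
  have hFL : ∀ n : ℤ, IsFlat R
      ↥(LinearMap.ker (W.d n (n+1)).hom) := by
    intro n
    have e : (W.cycles n) ≅ ModuleCat.of R
        (LinearMap.ker (W.d n (n+1)).hom) :=
      (HomologicalComplex.cyclesIsoSc' W (n-1) n (n+1) (by simp) (by simp)) ≪≫
        ShortComplex.moduleCatCyclesIso _
    exact Neeman.isFlat_of_equiv e.toLinearEquiv (hWcyc n)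
  have hcomm : ∀ (n : ℤ) (b : ↥(P.X n)),
      W.d n (n+1) (f.f n b) = f.f (n+1) (P.d n (n+1) b) := by
    intro n b
    have h := f.comm n (n+1)
    calc W.d n (n+1) (f.f n b) = (f.f n ≫ W.d n (n+1)) b := rfl
      _ = (P.d n (n+1) ≫ f.f (n+1)) b := by rw [h]
      _ = _ := rfl
  -- main combinatorial solution
  obtain ⟨H, hH⟩ := Neeman2.mainComb (R := R) (B := fun n => ↥(P.X n))
    (Wt := fun n => ↥(W.X n))
    (DW := fun n => (W.d n (n+1)).hom)
    (sd := fun n b => σ (n+1) (P.d n (n+1) b))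
    (fv := fun n b => f.f n b)
    (by intro n x; exact hDD n x)
    (by intro n x hx; exact hEX n x hx)
    (by intro n; exact hFL n)
    (by
      -- hsd2
      intro n b
      have e := key (n+1)
        ((σ (n+1+1)).comp (P.d (n+1) (n+1+1)).hom)
        (σ (n+1) (P.d n (n+1) b))
      calc ((σ (n+1) (P.d n (n+1) b)).sum fun c r => r • σ (n+1+1) (P.d (n+1) (n+1+1) c))
          = σ (n+1+1) (P.d (n+1) (n+1+1)
              (Finsupp.linearCombination R id (σ (n+1) (P.d n (n+1) b)))) := e
        _ = σ (n+1+1) (P.d (n+1) (n+1+1) (P.d n (n+1) b)) := by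
            rw [hσ (n+1) (P.d n (n+1) b)]
        _ = 0 := by rw [hPDD n b, map_zero])
    (by
      -- hfd
      intro n b
      have e := key (n+1) (f.f (n+1)).hom
        (σ (n+1) (P.d n (n+1) b))
      calc W.d n (n+1) (f.f n b) = f.f (n+1) (P.d n (n+1) b) := hcomm n b
        _ = f.f (n+1) (Finsupp.linearCombination R id (σ (n+1) (P.d n (n+1) b))) := by
            rw [hσ (n+1) (P.d n (n+1) b)]
        _ = _ := e.symm)
  simp only [Neeman2.Eqn] at hH
  -- build the homotopy
  set hc : ∀ j : ℤ, (P.X (j+1) ⟶ W.X j) := fun j =>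
    (ModuleCat.ofHom ((Finsupp.linearCombination R (H j)).comp (σ (j+1)) : ↥(P.X (j+1)) →ₗ[R] ↥(W.X j))
      : P.X (j+1) ⟶ W.X j) with hhc
  refine ⟨⟨fun i j => if h : i = j + 1 then (eqToHom (congrArg P.X h)) ≫ hc j else 0,
    ?_, ?_⟩⟩
  · intro i j hrel
    exact dif_neg (fun h => hrel h.symm)
  · intro i
    obtain ⟨n, rfl⟩ : ∃ n : ℤ, i = n + 1 := ⟨i - 1, by ring⟩
    rw [dNext_eq _ (show (ComplexShape.up ℤ).Rel (n+1) (n+1+1) by simp),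
      prevD_eq _ (show (ComplexShape.up ℤ).Rel n (n+1) by simp)]
    have h1 : (if h : (n+1+1 : ℤ) = (n+1) + 1 then (eqToHom (congrArg P.X h)) ≫ hc (n+1) else 0)
        = hc (n+1) := by
      rw [dif_pos rfl, eqToHom_refl, Category.id_comp]
    have h2 : (if h : (n+1 : ℤ) = n + 1 then (eqToHom (congrArg P.X h)) ≫ hc n else 0)
        = hc n := by
      rw [dif_pos rfl, eqToHom_refl, Category.id_comp]
    rw [h1, h2]
    have hzero : (0 : P ⟶ W).f (n+1) = 0 := by simp
    rw [hzero, add_zero]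
    ext x
    -- elementwise computation
    have hx : Finsupp.linearCombination R id (σ (n+1) x) = x := hσ (n+1) x
    have e0 : f.f (n+1) x = ((σ (n+1) x).sum fun b r => r • f.f (n+1) b) := by
      conv_lhs => rw [← hx]
      exact (key (n+1) (f.f (n+1)).hom (σ (n+1) x)).symm
    have e1 : hc (n+1) (P.d (n+1) (n+1+1) x)
        = ((σ (n+1) x).sum fun b r => r •
            (Finsupp.linearCombination R (H (n+1))) (σ (n+1+1) (P.d (n+1) (n+1+1) b))) := by
      have e := key (n+1)
        (((Finsupp.linearCombination R (H (n+1))).comp (σ (n+1+1))).comp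
          (P.d (n+1) (n+1+1)).hom) (σ (n+1) x)
      rw [hhc]
      calc ((ModuleCat.ofHom ((Finsupp.linearCombination R (H (n+1))).comp (σ (n+1+1))
              : ↥(P.X (n+1+1)) →ₗ[R] ↥(W.X (n+1))) : P.X (n+1+1) ⟶ W.X (n+1))
            (P.d (n+1) (n+1+1) x))
          = (((Finsupp.linearCombination R (H (n+1))).comp (σ (n+1+1))).comp
              (P.d (n+1) (n+1+1)).hom)
              (Finsupp.linearCombination R id (σ (n+1) x)) := by rw [hx]; rfl
        _ = _ := e.symm
    have e2 : W.d n (n+1) (hc n x)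
        = ((σ (n+1) x).sum fun b r => r • W.d n (n+1) (H n b)) := by
      rw [hhc]
      have : ((ModuleCat.ofHom (((Finsupp.linearCombination R (H n)).comp (σ (n+1))
          : ↥(P.X (n+1)) →ₗ[R] ↥(W.X n))) : P.X (n+1) ⟶ W.X n) x)
          = (σ (n+1) x).sum fun b r => r • H n b := by
        exact Finsupp.linearCombination_apply _ _
      show W.d n (n+1) _ = _
      rw [this, Neeman2.finsupp_sum_eq, Neeman2.finsupp_sum_eq, map_sum]
      refine Finset.sum_congr rfl fun b _ => ?_
      rw [map_smul]
    show f.f (n+1) x = hc (n+1) (P.d (n+1) (n+1+1) x) + W.d n (n+1) (hc n x)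
    rw [e0, e1, e2, Neeman2.finsupp_sum_eq, Neeman2.finsupp_sum_eq, Neeman2.finsupp_sum_eq,
      ← Finset.sum_add_distrib]
    refine Finset.sum_congr rfl fun b _ => ?_
    rw [hH n b]
    rw [Finsupp.linearCombination_apply]
    rw [smul_add]
    abel
end
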